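/- Let f be a piecewise contracting interval map on X satisfying the separation property. Then for every n ≥ 1, the collection of atoms of generation n is pairwise disjoint: if A, B ∈ 𝒜_n and A ∩ B ≠ ∅, then A = B. -/

import Mathlib

open Set Filter Metric Topology

/-- A piecewise contracting interval map (PCIM) on the compact interval `X = [a,b]`:
there are `N ≥ 1` pairwise disjoint nonempty open (relative to `X`) subintervals
whose closures cover `X`, and `f` contracts with rate `lam ∈ (0,1)` on each piece. -/
structure PCIM where
  a : ℝ
  b : ℝ
  hab : a < b
  N : ℕ
  hN : 1 ≤ N
  f : ℝ → ℝ
  lam : ℝ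
  hlam₀ : 0 < lam
  hlam₁ : lam < 1
  piece : Fin N → Set ℝ
  piece_nonempty : ∀ i, (piece i).Nonempty
  piece_interval : ∀ i, ∃ c d : ℝ, piece i = Set.Ioo c d ∩ Set.Icc a b
  piece_disjoint : ∀ i j, i ≠ j → Disjoint (piece i) (piece j)
  cover : Set.Icc a b = ⋃ i, closure (piece i)
  mapsTo : Set.MapsTo f (Set.Icc a b) (Set.Icc a b)
  contract : ∀ i, ∀ x ∈ piece i, ∀ y ∈ piece i, |f x - f y| ≤ lam * |x - y|

namespace PCIM

variable (P : PCIM)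

/-- The underlying compact interval `X`. -/
def X : Set ℝ := Set.Icc P.a P.b

/-- `X* = ⋃ i, X_i`, the union of the contraction pieces. -/
def Xstar : Set ℝ := ⋃ i, P.piece i

/-- `Δ = X \ X*`, the set of boundaries of the contraction pieces. -/
def Delta : Set ℝ := P.X \ P.Xstar

/-- `X̃ = ⋂_{j ≥ 0} f⁻ʲ(X*)`, the points all of whose iterates are well defined. -/
def Xtilde : Set ℝ := ⋂ j : ℕ, (P.f^[j]) ⁻¹' P.Xstar

/-- `D`: the set of one-sided limits of `f` at the points of `Δ`. -/
def D : Set ℝ :=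
  {L | ∃ c ∈ P.Delta,
    ((𝓝[P.X ∩ Set.Iio c] c).NeBot ∧ Filter.Tendsto P.f (𝓝[P.X ∩ Set.Iio c] c) (𝓝 L)) ∨
    ((𝓝[P.X ∩ Set.Ioi c] c).NeBot ∧ Filter.Tendsto P.f (𝓝[P.X ∩ Set.Ioi c] c) (𝓝 L))}

/-- A set `A` is `f`-pseudo-invariant if for every `x ∈ A` at least one of the
one-sided limits of `f` at `x` belongs to `A`. -/
def PseudoInvariant (A : Set ℝ) : Prop :=
  ∀ x ∈ A,
    (∃ L ∈ A, (𝓝[P.X ∩ Set.Iio x] x).NeBot ∧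
      Filter.Tendsto P.f (𝓝[P.X ∩ Set.Iio x] x) (𝓝 L)) ∨
    (∃ L ∈ A, (𝓝[P.X ∩ Set.Ioi x] x).NeBot ∧
      Filter.Tendsto P.f (𝓝[P.X ∩ Set.Ioi x] x) (𝓝 L))

/-- `f` is piecewise monotonic: strictly monotone on each contraction piece. -/
def PiecewiseMonotonic : Prop :=
  ∀ i, StrictMonoOn P.f (P.piece i) ∨ StrictAntiOn P.f (P.piece i)

/-- `f` satisfies the separation property: it is piecewise monotonic and the closures
of the images of distinct pieces are disjoint. -/
def SeparationProperty : Prop :=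
  P.PiecewiseMonotonic ∧
    ∀ i j, i ≠ j → closure (P.f '' P.piece i) ∩ closure (P.f '' P.piece j) = ∅

/-- The iterates `Λ_n` defining the attractor: `Λ_0 = X`,
`Λ_{n+1} = cl (f (Λ_n \ Δ))`. -/
def LambdaIter : (P : PCIM) → ℕ → Set ℝ
  | Q, 0 => Q.X
  | Q, n + 1 => closure (Q.f '' (LambdaIter Q n \ Q.Delta))

/-- The attractor `Λ = ⋂_{n ≥ 1} Λ_n`. -/
def Lambda : Set ℝ := ⋂ n : ℕ, P.LambdaIter (n + 1)

/-- The atom associated to the word `w = [i₁, …, iₙ]`: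
`A_{i₁…iₙ} = F_{iₙ} ∘ ⋯ ∘ F_{i₁}(X)` where `F_i(A) = cl (f (A ∩ X_i))`. -/
def atomOf (w : List (Fin P.N)) : Set ℝ :=
  w.foldl (fun A i => closure (P.f '' (A ∩ P.piece i))) P.X

/-- `𝒜_n`: the set of (nonempty) atoms of generation `n`. -/
def atoms (n : ℕ) : Set (Set ℝ) :=
  {A | ∃ w : List (Fin P.N), w.length = n ∧ P.atomOf w = A ∧ A.Nonempty}

/-- `θ` is the itinerary of `x`: `f^t(x) ∈ X_{θ_t}` for all `t`. -/
def IsItinerary (x : ℝ) (θ : ℕ → Fin P.N) : Prop :=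
  ∀ t : ℕ, P.f^[t] x ∈ P.piece (θ t)

/-- The word `θ_t θ_{t+1} … θ_{t+n-1}` of length `n` of the sequence `θ`. -/
def word (θ : ℕ → Fin P.N) (t n : ℕ) : List (Fin P.N) :=
  (List.range n).map fun k => θ (t + k)

/-- `L_n(θ)`: the set of words of length `n` occurring in `θ`. -/
def lang (θ : ℕ → Fin P.N) (n : ℕ) : Set (List (Fin P.N)) :=
  {w | ∃ t : ℕ, w = P.word θ t n}

/-- The complexity function `p_θ(n) = #L_n(θ)`. -/
noncomputable def complexity (θ : ℕ → Fin P.N) (n : ℕ) : ℕ := (P.lang θ n).ncard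

/-- The forward orbit of `x` under `f`. -/
def orbit (x : ℝ) : Set ℝ := {y | ∃ k : ℕ, P.f^[k] x = y}

/-- The ω-limit set of `x` under `f`. -/
def omegaLimitSet (x : ℝ) : Set ℝ :=
  ⋂ n : ℕ, closure {y | ∃ m : ℕ, n ≤ m ∧ P.f^[m] x = y}

/-- A compact pseudo-invariant set `A` is `X̃`-minimal if the orbit of every point
of `A ∩ X̃` is dense in `A`. -/
def XtildeMinimal (A : Set ℝ) : Prop :=
  IsCompact A ∧ P.PseudoInvariant A ∧ ∀ x ∈ A ∩ P.Xtilde, A ⊆ closure (P.orbit x)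

/-- A periodic orbit contained in `X̃`. -/
def IsPeriodicOrbit (A : Set ℝ) : Prop :=
  ∃ x ∈ P.Xtilde, ∃ p : ℕ, 1 ≤ p ∧ P.f^[p] x = x ∧ A = P.orbit x

end PCIM

/-- A Cantor set: nonempty, compact, perfect and totally disconnected. -/
def IsCantorSet (A : Set ℝ) : Prop :=
  A.Nonempty ∧ IsCompact A ∧ Perfect A ∧ IsTotallyDisconnected A


namespace PCIM

variable (P : PCIM)

lemma piece_subset_X' (i : Fin P.N) : P.piece i ⊆ Set.Icc P.a P.b := by
  obtain ⟨c, d, h⟩ := P.piece_interval i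
  rw [h]; exact inter_subset_right

lemma piece_ordConnected (i : Fin P.N) : (P.piece i).OrdConnected := by
  obtain ⟨c, d, h⟩ := P.piece_interval i
  rw [h]; exact Set.ordConnected_Ioo.inter Set.ordConnected_Icc

lemma continuousOn_piece (i : Fin P.N) : ContinuousOn P.f (P.piece i) := by
  refine LipschitzOnWith.continuousOn (K := Real.toNNReal P.lam)
    (LipschitzOnWith.of_dist_le_mul fun x hx y hy => ?_)
  rw [Real.dist_eq, Real.dist_eq, Real.coe_toNNReal _ P.hlam₀.le]
  exact P.contract i x hx y hy

lemma atomOf_concat (w : List (Fin P.N)) (i : Fin P.N) :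
    P.atomOf (w ++ [i]) = closure (P.f '' (P.atomOf w ∩ P.piece i)) := by
  simp [atomOf, List.foldl_append]

lemma atomOf_closed (w : List (Fin P.N)) : IsClosed (P.atomOf w) := by
  rcases List.eq_nil_or_concat w with rfl | ⟨w', i, rfl⟩
  · exact isClosed_Icc
  · rw [List.concat_eq_append, P.atomOf_concat]; exact isClosed_closure

lemma atomOf_ordConnected (w : List (Fin P.N)) : (P.atomOf w).OrdConnected := by
  induction w using List.reverseRecOn with
  | nil => exact Set.ordConnected_Icc
  | append_singleton w i ih =>
    rw [P.atomOf_concat]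
    have h2 : IsPreconnected (P.f '' (P.atomOf w ∩ P.piece i)) :=
      (isPreconnected_iff_ordConnected.2 (ih.inter (P.piece_ordConnected i))).image P.f
        ((P.continuousOn_piece i).mono inter_subset_right)
    exact isPreconnected_iff_ordConnected.1 h2.closure

/-- Key separation step: for ord-connected subsets `S, T` of a single piece,
if the closures of their images intersect, then their closures intersect. -/
lemma key (hmono : P.PiecewiseMonotonic) (i : Fin P.N) (S T : Set ℝ)
    (hS : S ⊆ P.piece i) (hT : T ⊆ P.piece i)
    (hSo : S.OrdConnected) (hTo : T.OrdConnected)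
    (h : (closure (P.f '' S) ∩ closure (P.f '' T)).Nonempty) :
    (closure S ∩ closure T).Nonempty := by
  by_contra hdis
  rw [Set.not_nonempty_iff_eq_empty] at hdis
  have hSne : S.Nonempty := by
    rcases S.eq_empty_or_nonempty with rfl | h'
    · simp at h
    · exact h'
  have hTne : T.Nonempty := by
    rcases T.eq_empty_or_nonempty with rfl | h'
    · simp at h
    · exact h'
  have hST : ∀ x ∈ S, ∀ y ∈ T, x ≠ y := by
    intro x hx y hy hxy
    have : y ∈ closure S ∩ closure T := ⟨hxy ▸ subset_closure hx, subset_closure hy⟩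
    simp [hdis] at this
  -- dichotomy: all of S is below T or all of T is below S
  have hdich : (∀ x ∈ S, ∀ y ∈ T, x < y) ∨ (∀ y ∈ T, ∀ x ∈ S, y < x) := by
    by_contra hc
    push_neg at hc
    obtain ⟨⟨x, hx, y, hy, hyx⟩, y', hy', x', hx', hx'y'⟩ := hc
    have h1 : y < x := lt_of_le_of_ne hyx (Ne.symm (hST x hx y hy))
    have h2 : x' < y' := lt_of_le_of_ne hx'y' fun e => hST x' hx' y' hy' e
    rcases le_or_gt y' x with h3 | h3
    · have : y' ∈ S := hSo.out hx' hx ⟨h2.le, h3⟩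
      exact hST y' this y' hy' rfl
    · have : x ∈ T := hTo.out hy hy' ⟨h1.le, h3.le⟩
      exact hST x hx x this rfl
  -- it suffices to derive a contradiction in the "S below T" case
  have main : ∀ S' T' : Set ℝ, S' ⊆ P.piece i → T' ⊆ P.piece i →
      S'.Nonempty → T'.Nonempty → closure S' ∩ closure T' = ∅ →
      (∀ x ∈ S', ∀ y ∈ T', x < y) →
      closure (P.f '' S') ∩ closure (P.f '' T') = ∅ := by
    intro S' T' hS' hT' hS'ne hT'ne hdis' hlt
    have hbddS : BddAbove S' := (bddAbove_Icc (a := P.a) (b := P.b)).mono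
      (hS'.trans (P.piece_subset_X' i))
    have hbddT : BddBelow T' := (bddBelow_Icc : BddBelow (Set.Icc P.a P.b)).mono
      (hT'.trans (P.piece_subset_X' i))
    set s2 := sSup S' with hs2
    set t1 := sInf T' with ht1
    have hle : s2 ≤ t1 := by
      apply csSup_le hS'ne
      intro x hx
      exact le_csInf hT'ne fun y hy => (hlt x hx y hy).le
    have hs2mem : s2 ∈ closure S' := csSup_mem_closure hS'ne hbddS
    have ht1mem : t1 ∈ closure T' := csInf_mem_closure hT'ne hbddT
    have hne' : s2 ≠ t1 := by
      intro e
      have : s2 ∈ closure S' ∩ closure T' := ⟨hs2mem, e ▸ ht1mem⟩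
      simp [hdis'] at this
    have hlt' : s2 < t1 := lt_of_le_of_ne hle hne'
    set m1 := s2 + (t1 - s2) / 3 with hm1
    set m2 := s2 + 2 * (t1 - s2) / 3 with hm2
    have h12 : s2 < m1 ∧ m1 < m2 ∧ m2 < t1 := by
      constructor; · rw [hm1]; linarith
      constructor; · rw [hm1, hm2]; linarith
      · rw [hm2]; linarith
    obtain ⟨x0, hx0⟩ := hS'ne
    obtain ⟨y0, hy0⟩ := hT'ne
    have hx0le : x0 ≤ s2 := le_csSup hbddS hx0
    have hy0ge : t1 ≤ y0 := csInf_le hbddT hy0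
    have hm1p : m1 ∈ P.piece i :=
      (P.piece_ordConnected i).out (hS' hx0) (hT' hy0)
        ⟨by linarith [h12.1], by linarith [h12.2.1, h12.2.2]⟩
    have hm2p : m2 ∈ P.piece i :=
      (P.piece_ordConnected i).out (hS' hx0) (hT' hy0)
        ⟨by linarith [h12.1, h12.2.1], by linarith [h12.2.2]⟩
    have hxm1 : ∀ x ∈ S', x < m1 := fun x hx =>
      lt_of_le_of_lt (le_csSup hbddS hx) h12.1
    have hym2 : ∀ y ∈ T', m2 < y := fun y hy =>
      lt_of_lt_of_le h12.2.2 (csInf_le hbddT hy)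
    rcases hmono i with hmon | hant
    · have hA : closure (P.f '' S') ⊆ Set.Iic (P.f m1) := by
        apply closure_minimal _ isClosed_Iic
        rintro _ ⟨x, hx, rfl⟩
        exact (hmon (hS' hx) hm1p (hxm1 x hx)).le
      have hB : closure (P.f '' T') ⊆ Set.Ici (P.f m2) := by
        apply closure_minimal _ isClosed_Ici
        rintro _ ⟨y, hy, rfl⟩
        exact (hmon hm2p (hT' hy) (hym2 y hy)).le
      have hfm : P.f m1 < P.f m2 := hmon hm1p hm2p h12.2.1
      ext z
      simp only [Set.mem_inter_iff, Set.mem_empty_iff_false, iff_false, not_and]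
      intro hz1 hz2
      have := hA hz1
      have := hB hz2
      simp only [Set.mem_Iic, Set.mem_Ici] at *
      linarith
    · have hA : closure (P.f '' S') ⊆ Set.Ici (P.f m1) := by
        apply closure_minimal _ isClosed_Ici
        rintro _ ⟨x, hx, rfl⟩
        exact (hant (hS' hx) hm1p (hxm1 x hx)).le
      have hB : closure (P.f '' T') ⊆ Set.Iic (P.f m2) := by
        apply closure_minimal _ isClosed_Iic
        rintro _ ⟨y, hy, rfl⟩
        exact (hant hm2p (hT' hy) (hym2 y hy)).le
      have hfm : P.f m2 < P.f m1 := hant hm1p hm2p h12.2.1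
      ext z
      simp only [Set.mem_inter_iff, Set.mem_empty_iff_false, iff_false, not_and]
      intro hz1 hz2
      have := hA hz1
      have := hB hz2
      simp only [Set.mem_Iic, Set.mem_Ici] at *
      linarith
  rcases hdich with hlt | hlt
  · obtain ⟨z, hz⟩ := h
    have := main S T hS hT hSne hTne hdis hlt
    rw [this] at hz
    exact hz
  · obtain ⟨z, hz1, hz2⟩ := h
    have := main T S hT hS hTne hSne (by rw [Set.inter_comm]; exact hdis) hlt
    have : z ∈ (∅ : Set ℝ) := this ▸ ⟨hz2, hz1⟩
    exact this

lemma atoms_eq (hsep : P.SeparationProperty) :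
    ∀ n : ℕ, ∀ w v : List (Fin P.N), w.length = n → v.length = n →
      (P.atomOf w ∩ P.atomOf v).Nonempty → P.atomOf w = P.atomOf v := by
  intro n
  induction n with
  | zero =>
    intro w v hw hv _
    rw [List.length_eq_zero_iff] at hw hv
    rw [hw, hv]
  | succ n ih =>
    intro w v hw hv hne
    obtain rfl | ⟨w', i, rfl⟩ := List.eq_nil_or_concat w
    · simp at hw
    obtain rfl | ⟨v', j, rfl⟩ := List.eq_nil_or_concat v
    · simp at hv
    simp only [List.concat_eq_append] at hw hv hne ⊢
    have hwlen : w'.length = n := by simpa using hw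
    have hvlen : v'.length = n := by simpa using hv
    have hsubw : P.atomOf (w' ++ [i]) ⊆ closure (P.f '' P.piece i) := by
      rw [P.atomOf_concat]
      exact closure_mono (Set.image_mono inter_subset_right)
    have hsubv : P.atomOf (v' ++ [j]) ⊆ closure (P.f '' P.piece j) := by
      rw [P.atomOf_concat]
      exact closure_mono (Set.image_mono inter_subset_right)
    have hij : i = j := by
      by_contra hne'
      obtain ⟨x, hx1, hx2⟩ := hne
      have hx : x ∈ closure (P.f '' P.piece i) ∩ closure (P.f '' P.piece j) :=
        ⟨hsubw hx1, hsubv hx2⟩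
      rw [hsep.2 i j hne'] at hx
      exact hx
    subst hij
    rw [P.atomOf_concat, P.atomOf_concat] at hne
    have hkey := P.key hsep.1 i (P.atomOf w' ∩ P.piece i) (P.atomOf v' ∩ P.piece i)
      inter_subset_right inter_subset_right
      ((P.atomOf_ordConnected w').inter (P.piece_ordConnected i))
      ((P.atomOf_ordConnected v').inter (P.piece_ordConnected i))
      hne
    obtain ⟨x, hx1, hx2⟩ := hkey
    have hx1' : x ∈ P.atomOf w' :=
      (IsClosed.closure_subset_iff (P.atomOf_closed w')).2 inter_subset_left hx1
    have hx2' : x ∈ P.atomOf v' :=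
      (IsClosed.closure_subset_iff (P.atomOf_closed v')).2 inter_subset_left hx2
    have heq := ih w' v' hwlen hvlen ⟨x, hx1', hx2'⟩
    rw [P.atomOf_concat, P.atomOf_concat, heq]

end PCIM

/-- Under the separation property, atoms of the same generation
`n ≥ 1` are pairwise disjoint: if two of them intersect, they are equal. -/
theorem atoms_pairwise_disjoint (P : PCIM) (hsep : P.SeparationProperty) :
    ∀ n : ℕ, 1 ≤ n → ∀ A ∈ P.atoms n, ∀ B ∈ P.atoms n,
      (A ∩ B).Nonempty → A = B := by
  intro n _ A hA B hB hAB
  obtain ⟨w, hwlen, rfl, -⟩ := hA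
  obtain ⟨v, hvlen, rfl, -⟩ := hB
  exact P.atoms_eq hsep n w v hwlen hvlen hAB
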